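/- Let n ≥ 1 and let A, X be n×n complex matrices such that exp(XA − AX) = X, where exp is the matrix exponential. Then the matrix C := XA − AX is nilpotent, X − I_n is nilpotent, and Σ_{k=1}^{n−1} (1/k!) · C^k = X − I_n. -/

import Mathlib

open Polynomial Module LinearMap

/-- An endomorphism of a finite-dimensional complex vector space all of whose power traces
vanish is nilpotent. -/
lemma aux_end_nilpotent {V : Type*} [AddCommGroup V] [Module ℂ V] [FiniteDimensional ℂ V]
    (f : Module.End ℂ V) (htr : ∀ k, 1 ≤ k → LinearMap.trace ℂ V (f ^ k) = 0) :
    IsNilpotent f := by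
  classical
  set W := fun μ : ℂ => f.maxGenEigenspace μ with hWdef
  have hmaps1 : ∀ μ : ℂ, Set.MapsTo f (W μ) (W μ) :=
    fun μ => Module.End.mapsTo_maxGenEigenspace_of_comm (Commute.refl f) μ
  have hmaps : ∀ (μ : ℂ) (k : ℕ), Set.MapsTo (f ^ k) (W μ) (W μ) :=
    fun μ k => Module.End.mapsTo_maxGenEigenspace_of_comm ((Commute.refl f).pow_right k) μ
  have hds := DirectSum.isInternal_submodule_of_iSupIndep_of_iSup_eq_top
    f.independent_maxGenEigenspace (Module.End.iSup_maxGenEigenspace_eq_top f)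
  have h_fin : {μ : ℂ | W μ ≠ ⊥}.Finite :=
    WellFoundedGT.finite_ne_bot_of_iSupIndep f.independent_maxGenEigenspace
  have key : ∀ (μ : ℂ) (k : ℕ),
      LinearMap.trace ℂ _ ((f ^ k).restrict (hmaps μ k)) =
        μ ^ k * (Module.finrank ℂ (W μ) : ℂ) := by
    intro μ k
    have hmapsAlg : Set.MapsTo (algebraMap ℂ (Module.End ℂ V) μ) (W μ) (W μ) := by
      intro x hx
      simpa [Module.algebraMap_end_apply] using Submodule.smul_mem _ μ hx
    have hnil : IsNilpotent (f.restrict (hmaps1 μ) - algebraMap ℂ (Module.End ℂ (W μ)) μ) := by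
      have h2 := f.isNilpotent_restrict_maxGenEigenspace_sub_algebraMap μ
        (Module.End.mapsTo_maxGenEigenspace_of_comm
          (Algebra.mul_sub_algebraMap_commutes f μ) μ)
      have e1 : f.restrict (hmaps1 μ) - algebraMap ℂ (Module.End ℂ (W μ)) μ
          = (f - algebraMap ℂ (Module.End ℂ V) μ).restrict
              (Module.End.mapsTo_maxGenEigenspace_of_comm
                (Algebra.mul_sub_algebraMap_commutes f μ) μ) := by
        apply LinearMap.ext
        intro x
        apply Subtype.ext
        simp [LinearMap.restrict_apply, Module.algebraMap_end_apply]
        rfl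
      rw [e1]
      exact h2
    have hgk : (f ^ k).restrict (hmaps μ k) = (f.restrict (hmaps1 μ)) ^ k :=
      (Module.End.pow_restrict k (hmaps1 μ)).symm
    have main : ∀ j : ℕ, LinearMap.trace ℂ (W μ) ((f.restrict (hmaps1 μ)) ^ j)
        = μ ^ j * (Module.finrank ℂ (W μ) : ℂ) := by
      intro j
      induction j with
      | zero =>
        simp [LinearMap.trace_one ℂ (W μ)]
      | succ j ih =>
        have hcomm : Commute ((f.restrict (hmaps1 μ)) ^ j) (f.restrict (hmaps1 μ)) :=
          (Commute.refl _).pow_left j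
        have htc := LinearMap.trace_comp_eq_mul_of_commute_of_isNilpotent μ hcomm hnil
        rw [pow_succ, Module.End.mul_eq_comp, htc, ih]
        ring
    rw [hgk]
    exact main k
  have hsum : ∀ k, LinearMap.trace ℂ V (f ^ k)
      = ∑ μ ∈ h_fin.toFinset, μ ^ k * (Module.finrank ℂ (W μ) : ℂ) := by
    intro k
    rw [LinearMap.trace_eq_sum_trace_restrict' hds h_fin (fun μ => hmaps μ k)]
    exact Finset.sum_congr rfl fun μ _ => key μ k
  have hzero : ∀ μ ∈ h_fin.toFinset, μ = 0 := by
    intro μ₀ hμ₀mem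
    by_contra hμ₀ne
    set s := h_fin.toFinset with hs
    set p : ℂ[X] := X * ∏ ν ∈ s.erase μ₀, (X - C ν) with hp
    have hp0 : p.coeff 0 = 0 := by
      rw [Polynomial.coeff_zero_eq_eval_zero, hp]
      simp
    have hsum0 : ∑ μ ∈ s, (Module.finrank ℂ (W μ) : ℂ) * p.eval μ = 0 := by
      have heval : ∀ μ : ℂ, p.eval μ
          = ∑ k ∈ Finset.range (p.natDegree + 1), p.coeff k * μ ^ k :=
        fun μ => p.eval_eq_sum_range μ
      simp_rw [heval, Finset.mul_sum]
      rw [Finset.sum_comm]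
      refine Finset.sum_eq_zero fun k _ => ?_
      rcases Nat.eq_zero_or_pos k with rfl | hkpos
      · simp [hp0]
      · have h1 : ∑ μ ∈ s, μ ^ k * (Module.finrank ℂ (W μ) : ℂ) = 0 := by
          rw [← hsum k]; exact htr k hkpos
        have h2 : ∑ μ ∈ s, (Module.finrank ℂ (W μ) : ℂ) * (p.coeff k * μ ^ k)
            = p.coeff k * ∑ μ ∈ s, μ ^ k * (Module.finrank ℂ (W μ) : ℂ) := by
          rw [Finset.mul_sum]
          exact Finset.sum_congr rfl fun μ _ => by ring
        rw [h2, h1, mul_zero]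
    have hsingle : ∑ μ ∈ s, (Module.finrank ℂ (W μ) : ℂ) * p.eval μ
        = (Module.finrank ℂ (W μ₀) : ℂ) * p.eval μ₀ := by
      apply Finset.sum_eq_single_of_mem μ₀ hμ₀mem
      intro ν hν hνne
      have hz : p.eval ν = 0 := by
        rw [hp]
        simp only [eval_mul, eval_X, Polynomial.eval_prod, eval_sub, eval_C]
        have : ∏ ν' ∈ s.erase μ₀, (ν - ν') = 0 :=
          Finset.prod_eq_zero (Finset.mem_erase.mpr ⟨hνne, hν⟩) (by ring)
        rw [this, mul_zero]
      rw [hz, mul_zero]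
    have hne : p.eval μ₀ ≠ 0 := by
      rw [hp]
      simp only [eval_mul, eval_X, Polynomial.eval_prod, eval_sub, eval_C]
      refine mul_ne_zero hμ₀ne (Finset.prod_ne_zero_iff.mpr fun ν hν => ?_)
      exact sub_ne_zero.mpr (Finset.ne_of_mem_erase hν).symm
    have hd : (Module.finrank ℂ (W μ₀) : ℂ) ≠ 0 := by
      have hbot : W μ₀ ≠ ⊥ := by
        have := h_fin.mem_toFinset.mp hμ₀mem
        exact this
      have : Nontrivial (W μ₀) := Submodule.nontrivial_iff_ne_bot.mpr hbot
      have hpos : 0 < Module.finrank ℂ (W μ₀) := Module.finrank_pos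
      exact_mod_cast hpos.ne'
    rw [hsingle] at hsum0
    exact mul_ne_zero hd hne hsum0
  have htop : f.maxGenEigenspace 0 = ⊤ := by
    rw [eq_top_iff, ← Module.End.iSup_maxGenEigenspace_eq_top f]
    refine iSup_le fun μ => ?_
    rcases eq_or_ne μ 0 with rfl | hμ
    · exact le_rfl
    · have hbot : W μ = ⊥ := by
        by_contra hb
        exact hμ (hzero μ (h_fin.mem_toFinset.mpr hb))
      rw [show f.maxGenEigenspace μ = ⊥ from hbot]
      exact bot_le
  have hfor : ∀ m : V, ∃ k : ℕ, (f ^ k) m = 0 := by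
    intro m
    have hm : m ∈ f.maxGenEigenspace 0 := htop ▸ Submodule.mem_top
    rw [Module.End.mem_maxGenEigenspace] at hm
    obtain ⟨k, hk⟩ := hm
    exact ⟨k, by simpa using hk⟩
  exact ((LinearMap.charpoly_nilpotent_tfae f).out 0 2).mpr hfor

/-- A complex matrix all of whose power traces vanish is nilpotent. -/
lemma aux_matrix_nilpotent {n : ℕ} (M : Matrix (Fin n) (Fin n) ℂ)
    (htr : ∀ k, 1 ≤ k → Matrix.trace (M ^ k) = 0) : IsNilpotent M := by
  let e : Matrix (Fin n) (Fin n) ℂ ≃ₐ[ℂ] Module.End ℂ (Fin n → ℂ) :=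
    Matrix.toLinAlgEquiv'
  have hf : IsNilpotent (e M) := by
    apply aux_end_nilpotent
    intro k hk
    rw [← map_pow, LinearMap.trace_eq_matrix_trace ℂ (Pi.basisFun ℂ (Fin n)),
      LinearMap.toMatrix_eq_toMatrix']
    have : LinearMap.toMatrix' ((e (M ^ k)) : (Fin n → ℂ) →ₗ[ℂ] (Fin n → ℂ)) = M ^ k :=
      LinearMap.toMatrix'_toLin' (M ^ k)
    rw [this]
    exact htr k hk
  have := hf.map e.symm.toAlgHom
  simpa using this

/-- A nilpotent `n × n` complex matrix satisfies `M ^ n = 0`. -/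
lemma aux_pow_eq_zero {n : ℕ} (M : Matrix (Fin n) (Fin n) ℂ) (h : IsNilpotent M) :
    M ^ n = 0 := by
  have h1 : M.charpoly = X ^ n := by
    have h2 := Matrix.isNilpotent_charpoly_sub_pow_of_isNilpotent h
    have h3 : M.charpoly - X ^ Fintype.card (Fin n) = 0 := h2.eq_zero
    rw [sub_eq_zero, Fintype.card_fin] at h3
    exact h3
  have h4 := M.aeval_self_charpoly
  rw [h1] at h4
  simpa using h4

theorem stmt16 (n : ℕ) (hn : 1 ≤ n) (A X : Matrix (Fin n) (Fin n) ℂ)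
    (h : NormedSpace.exp (X * A - A * X) = X) :
    IsNilpotent (X * A - A * X) ∧
    IsNilpotent (X - (1 : Matrix (Fin n) (Fin n) ℂ)) ∧
    ∑ k ∈ Finset.Icc 1 (n - 1), ((1 : ℂ) / (Nat.factorial k : ℂ)) • (X * A - A * X) ^ k =
      X - (1 : Matrix (Fin n) (Fin n) ℂ) := by
  set C : Matrix (Fin n) (Fin n) ℂ := X * A - A * X with hCdef
  -- X commutes with C since X = exp C
  have hXC : Commute X C := by
    rw [← h]
    exact (Commute.refl C).exp_left
  -- traces of powers of C vanish
  have htr : ∀ k, 1 ≤ k → Matrix.trace (C ^ k) = 0 := by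
    intro k hk
    obtain ⟨m, rfl⟩ : ∃ m, k = m + 1 := ⟨k - 1, (Nat.succ_pred_eq_of_pos hk).symm⟩
    have hcm : C ^ m * X = X * C ^ m := ((hXC.symm).pow_left m).eq
    have e1 : C ^ (m + 1) = C ^ m * (X * A) - C ^ m * (A * X) := by
      rw [pow_succ, hCdef, mul_sub]
    rw [e1, Matrix.trace_sub]
    have e2 : Matrix.trace (C ^ m * (X * A)) = Matrix.trace (C ^ m * (A * X)) := by
      calc Matrix.trace (C ^ m * (X * A)) = Matrix.trace ((C ^ m * X) * A) := by
            rw [mul_assoc]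
        _ = Matrix.trace ((X * C ^ m) * A) := by rw [hcm]
        _ = Matrix.trace (X * (C ^ m * A)) := by rw [mul_assoc]
        _ = Matrix.trace ((C ^ m * A) * X) := Matrix.trace_mul_comm _ _
        _ = Matrix.trace (C ^ m * (A * X)) := by rw [mul_assoc]
    rw [e2, sub_self]
  have hCnil : IsNilpotent C := aux_matrix_nilpotent C htr
  have hCn : C ^ n = 0 := aux_pow_eq_zero C hCnil
  -- expansion of the exponential as a finite sum
  have hexp : X = ∑ k ∈ Finset.range n, ((k.factorial : ℂ))⁻¹ • C ^ k := by
    rw [← h, NormedSpace.exp_eq_tsum (𝕂 := ℂ)]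
    refine tsum_eq_sum fun k hk => ?_
    have hkn : n ≤ k := by simpa using hk
    have : C ^ k = 0 := by
      obtain ⟨m, rfl⟩ := Nat.exists_eq_add_of_le hkn
      rw [pow_add, hCn, zero_mul]
    rw [this, smul_zero]
  have hrange : Finset.range n = insert 0 (Finset.Icc 1 (n - 1)) := by
    ext k
    simp only [Finset.mem_range, Finset.mem_insert, Finset.mem_Icc]
    omega
  have hsum : ∑ k ∈ Finset.range n, ((k.factorial : ℂ))⁻¹ • C ^ k
      = 1 + ∑ k ∈ Finset.Icc 1 (n - 1), ((1 : ℂ) / (k.factorial : ℂ)) • C ^ k := by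
    rw [hrange, Finset.sum_insert (by simp)]
    simp [one_div]
  have hXeq : X = 1 + ∑ k ∈ Finset.Icc 1 (n - 1), ((1 : ℂ) / (k.factorial : ℂ)) • C ^ k := by
    rw [hexp, hsum]
  have hfinal : ∑ k ∈ Finset.Icc 1 (n - 1), ((1 : ℂ) / (k.factorial : ℂ)) • C ^ k = X - 1 := by
    rw [hXeq, add_sub_cancel_left]
  refine ⟨hCnil, ?_, hfinal⟩
  rw [← hfinal]
  refine Commute.isNilpotent_sum (fun k hk => ?_) (fun i j _ _ => ?_)
  · have hk1 : 1 ≤ k := (Finset.mem_Icc.mp hk).1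
    exact (hCnil.pow_of_pos (by omega)).smul _
  · exact ((Commute.refl C).pow_pow i j).smul_left _ |>.smul_right _
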